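/- Decomposition of subusage: the subusage relation ⊑ coincides with the reflexive-transitive closure of the relation ⊑_t, where U ⊑_t V holds iff there exist U', V' with U ≡ U', V ≡ V', and U' ⊑_ct V', and ⊑_ct is the subusage relation generated without the congruence and transitivity rules. -/

import Mathlib

namespace PiSpan

/-! ### Indices: integer expressions over index variables, with `∞` -/

abbrev IVar := ℕ

/-- Indices, built from index variables, function symbols (constants, addition,
multiplication, truncated subtraction, max, min) and `∞`. -/
inductive Idx : Type where
  | var : IVar → Idx
  | const : ℕ → Idx
  | add : Idx → Idx → Idx
  | mul : Idx → Idx → Idx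
  | sub : Idx → Idx → Idx
  | imax : Idx → Idx → Idx
  | imin : Idx → Idx → Idx
  | inf : Idx
  deriving DecidableEq

/-- Valuations of index variables. -/
abbrev Val := IVar → ℕ

/-- Interpretation of an index in `ℕ∞` under a valuation. -/
noncomputable def Idx.eval (ρ : Val) : Idx → ℕ∞
  | .var i => (ρ i : ℕ∞)
  | .const n => (n : ℕ∞)
  | .add I J => I.eval ρ + J.eval ρ
  | .mul I J => I.eval ρ * J.eval ρ
  | .sub I J => I.eval ρ - J.eval ρ
  | .imax I J => max (I.eval ρ) (J.eval ρ)
  | .imin I J => min (I.eval ρ) (J.eval ρ)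
  | .inf => ⊤

/-- Free index variables of an index. -/
def Idx.fv : Idx → Finset IVar
  | .var i => {i}
  | .const _ => ∅
  | .add I J => I.fv ∪ J.fv
  | .mul I J => I.fv ∪ J.fv
  | .sub I J => I.fv ∪ J.fv
  | .imax I J => I.fv ∪ J.fv
  | .imin I J => I.fv ∪ J.fv
  | .inf => ∅

/-- Substitution of the index `J` for the index variable `i`. -/
def Idx.subst : Idx → IVar → Idx → Idx
  | .var x, i, J => if x = i then J else .var x
  | .const n, _, _ => .const n
  | .add a b, i, J => .add (a.subst i J) (b.subst i J)
  | .mul a b, i, J => .mul (a.subst i J) (b.subst i J)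
  | .sub a b, i, J => .sub (a.subst i J) (b.subst i J)
  | .imax a b, i, J => .imax (a.subst i J) (b.subst i J)
  | .imin a b, i, J => .imin (a.subst i J) (b.subst i J)
  | .inf, _, _ => .inf

/-- A constraint `I ⋈ J` between two indices, for a binary relation `⋈` on `ℕ∞`. -/
structure Constraint where
  lhs : Idx
  rel : ℕ∞ → ℕ∞ → Prop
  rhs : Idx

/-- Satisfaction of a constraint by a valuation. -/
def Constraint.sat (ρ : Val) (C : Constraint) : Prop :=
  C.rel (C.lhs.eval ρ) (C.rhs.eval ρ)

def Constraint.fv (C : Constraint) : Finset IVar := C.lhs.fv ∪ C.rhs.fv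

def Constraint.subst (C : Constraint) (i : IVar) (J : Idx) : Constraint :=
  ⟨C.lhs.subst i J, C.rel, C.rhs.subst i J⟩

/-- A (finite) set of constraints. -/
abbrev CSet := List Constraint

def satAll (ρ : Val) (Φ : CSet) : Prop := ∀ C ∈ Φ, C.sat ρ

/-- `entails φ Φ C` : every valuation satisfying `Φ` satisfies `C`. -/
def entails (_φ : Finset IVar) (Φ : CSet) (C : Constraint) : Prop :=
  ∀ ρ : Val, satAll ρ Φ → C.sat ρ

/-- Semantic comparison of indices under the constraints `Φ`. -/
def semLe (_φ : Finset IVar) (Φ : CSet) (I J : Idx) : Prop :=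
  ∀ ρ : Val, satAll ρ Φ → I.eval ρ ≤ J.eval ρ

/-- Intervals `[I, J]` of indices. -/
structure Interval where
  lo : Idx
  hi : Idx
  deriving DecidableEq

def Interval.subst (A : Interval) (i : IVar) (J : Idx) : Interval :=
  ⟨A.lo.subst i J, A.hi.subst i J⟩

/-- `semIncl φ Φ A B` : the interval `A` is included in `B`, under every
valuation satisfying `Φ`. -/
def semIncl (_φ : Finset IVar) (Φ : CSet) (A B : Interval) : Prop :=
  ∀ ρ : Val, satAll ρ Φ → B.lo.eval ρ ≤ A.lo.eval ρ ∧ A.hi.eval ρ ≤ B.hi.eval ρ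

/-- Semantic equality of intervals under the constraints `Φ`. -/
def semEqI (_φ : Finset IVar) (Φ : CSet) (A B : Interval) : Prop :=
  ∀ ρ : Val, satAll ρ Φ → A.lo.eval ρ = B.lo.eval ρ ∧ A.hi.eval ρ = B.hi.eval ρ

/-- Capacities: either a single index `J` (to be understood as `[-∞, J]`)
or an interval `[I, J]`. -/
inductive Cap where
  | single : Idx → Cap
  | intv : Idx → Idx → Cap
  deriving DecidableEq

def Cap.subst : Cap → IVar → Idx → Cap
  | .single a, i, J => .single (a.subst i J)
  | .intv a b, i, J => .intv (a.subst i J) (b.subst i J)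

/-- `capLe φ Φ c d` : inclusion of capacities, a single index `J` being
understood as the interval `[-∞, J]`. -/
def capLe (φ : Finset IVar) (Φ : CSet) : Cap → Cap → Prop
  | .single I, .single J => semLe φ Φ I J
  | .single _, .intv _ _ => False
  | .intv _ J, .single J' => semLe φ Φ J J'
  | .intv I J, .intv I' J' => semLe φ Φ I' I ∧ semLe φ Φ J J'

/-- Componentwise sum of intervals: `[I,J] + [I',J'] = [I+I', J+J']`. -/
def Interval.add (A B : Interval) : Interval := ⟨A.lo.add B.lo, A.hi.add B.hi⟩

/-- Sum of an interval and a capacity: `[I,J] + J' = [I, J+J']` (single index)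
and componentwise sum for an interval capacity. -/
def Interval.addCap (A : Interval) : Cap → Interval
  | .single J => ⟨A.lo, A.hi.add J⟩
  | .intv I J => ⟨A.lo.add I, A.hi.add J⟩

/-- The operation `⊞`: `A ⊞ J = [0, lo(A)+J]` and `A ⊞ [I,J] = [hi(A)+I, lo(A)+J]`. -/
def Interval.boxPlus (A : Interval) : Cap → Interval
  | .single J => ⟨.const 0, A.lo.add J⟩
  | .intv I J => ⟨A.hi.add I, A.lo.add J⟩

/-- The join `[I,J] ⊔ [I',J'] = [max(I,I'), max(J,J')]`. -/
def Interval.join (A B : Interval) : Interval := ⟨A.lo.imax B.lo, A.hi.imax B.hi⟩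

def zeroI : Interval := ⟨.const 0, .const 0⟩
def oneI : Interval := ⟨.const 1, .const 1⟩
def constI (n : ℕ) : Interval := ⟨.const n, .const n⟩

/-! ### Usages -/

/-- Usages: CCS-like processes on a single channel, where each action carries
an obligation interval and a capacity. -/
inductive Usage where
  | nil : Usage
  | par : Usage → Usage → Usage
  | inp : Interval → Cap → Usage → Usage
  | out : Interval → Cap → Usage → Usage
  | bang : Usage → Usage
  | choice : Usage → Usage → Usage
  deriving DecidableEq

/-- Delaying `↑^{A}U` : adds `A` to the obligation of every top-level action. -/
def Usage.delay (A : Interval) : Usage → Usage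
  | .nil => .nil
  | .par U V => .par (U.delay A) (V.delay A)
  | .inp B c U => .inp (A.add B) c U
  | .out B c U => .out (A.add B) c U
  | .bang U => .bang (U.delay A)
  | .choice U V => .choice (U.delay A) (V.delay A)

/-- Delaying by a capacity `↑^{J_c}U`. -/
def Usage.delayCap (c : Cap) : Usage → Usage
  | .nil => .nil
  | .par U V => .par (U.delayCap c) (V.delayCap c)
  | .inp B d U => .inp (B.addCap c) d U
  | .out B d U => .out (B.addCap c) d U
  | .bang U => .bang (U.delayCap c)
  | .choice U V => .choice (U.delayCap c) (V.delayCap c)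

def Usage.subst : Usage → IVar → Idx → Usage
  | .nil, _, _ => .nil
  | .par U V, i, J => .par (U.subst i J) (V.subst i J)
  | .inp B c U, i, J => .inp (B.subst i J) (c.subst i J) (U.subst i J)
  | .out B c U, i, J => .out (B.subst i J) (c.subst i J) (U.subst i J)
  | .bang U, i, J => .bang (U.subst i J)
  | .choice U V, i, J => .choice (U.subst i J) (V.subst i J)

/-- Congruence on usages. -/
inductive UCongr : Usage → Usage → Prop
  | refl : UCongr U U
  | symm : UCongr U V → UCongr V U
  | trans : UCongr U V → UCongr V W → UCongr U W
  | parNil : UCongr (.par U .nil) U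
  | parComm : UCongr (.par U V) (.par V U)
  | parAssoc : UCongr (.par U (.par V W)) (.par (.par U V) W)
  | bangNil : UCongr (.bang .nil) .nil
  | bangUnfold : UCongr (.bang U) (.par (.bang U) U)
  | bangPar : UCongr (.bang (.par U V)) (.par (.bang U) (.bang V))
  | bangBang : UCongr (.bang (.bang U)) (.bang U)
  | parCtx : UCongr U U' → UCongr V V' → UCongr (.par U V) (.par U' V')
  | inpCtx : UCongr U U' → UCongr (.inp A c U) (.inp A c U')
  | outCtx : UCongr U U' → UCongr (.out A c U) (.out A c U')
  | bangCtx : UCongr U U' → UCongr (.bang U) (.bang U')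
  | choiceCtx : UCongr U U' → UCongr V V' → UCongr (.choice U V) (.choice U' V')

/-- Result of a usage reduction step: a usage, or the error `Error`. -/
inductive URes where
  | ok : Usage → URes
  | err : URes

/-- Congruence extended to reduction results. -/
inductive RCongr : URes → URes → Prop
  | ok : UCongr U V → RCongr (.ok U) (.ok V)
  | err : RCongr .err .err

/-- Side condition for a successful synchronization:
`Φ ⊨ B ⊆ A ⊞ I_c` and `Φ ⊨ A ⊆ B ⊞ J_c`. -/
def goodSync (φ : Finset IVar) (Φ : CSet) (A : Interval) (ic : Cap)
    (B : Interval) (jc : Cap) : Prop :=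
  semIncl φ Φ B (A.boxPlus ic) ∧ semIncl φ Φ A (B.boxPlus jc)

/-- Reduction of usages (possibly to `Error`). -/
inductive URed (φ : Finset IVar) (Φ : CSet) : Usage → URes → Prop
  | comm : goodSync φ Φ A ic B jc →
      URed φ Φ (.par (.inp A ic U) (.out B jc V)) (.ok ((U.par V).delay (A.join B)))
  | commErr : ¬ goodSync φ Φ A ic B jc →
      URed φ Φ (.par (.inp A ic U) (.out B jc V)) .err
  | choiceL : URed φ Φ (.choice U V) (.ok U)
  | choiceR : URed φ Φ (.choice U V) (.ok V)
  | parCtx : URed φ Φ U (.ok U') → URed φ Φ (.par U V) (.ok (.par U' V))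
  | parErr : URed φ Φ U .err → URed φ Φ (.par U V) .err
  | congr : UCongr U U' → URed φ Φ U' R' → RCongr R' R → URed φ Φ U R

/-- Multi-step reduction of usages (never going through an error). -/
def URedStar (φ : Finset IVar) (Φ : CSet) : Usage → Usage → Prop :=
  Relation.ReflTransGen (fun U V => URed φ Φ U (.ok V))

/-- Multi-step reduction towards a result, possibly ending with an error step. -/
def URedStarRes (φ : Finset IVar) (Φ : CSet) (U : Usage) : URes → Prop
  | .ok V => URedStar φ Φ U V
  | .err => ∃ W, URedStar φ Φ U W ∧ URed φ Φ W .err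

/-- A usage is reliable when no reduction sequence from it leads to an error. -/
def Reliable (φ : Finset IVar) (Φ : CSet) (U : Usage) : Prop :=
  ∀ V, URedStar φ Φ U V → ¬ URed φ Φ V .err

/-- The subusage relation. -/
inductive SubU (φ : Finset IVar) (Φ : CSet) : Usage → Usage → Prop
  | toNil : SubU φ Φ U .nil
  | choiceElimL : SubU φ Φ (.choice U V) U
  | choiceElimR : SubU φ Φ (.choice U V) V
  | choiceCtxL : SubU φ Φ U U' → SubU φ Φ (.choice U V) (.choice U' V)
  | choiceCtxR : SubU φ Φ V V' → SubU φ Φ (.choice U V) (.choice U V')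
  | parCtx : SubU φ Φ U U' → SubU φ Φ (.par U V) (.par U' V)
  | bangCtx : SubU φ Φ U U' → SubU φ Φ (.bang U) (.bang U')
  | congr : UCongr U U' → SubU φ Φ U' V' → UCongr V' V → SubU φ Φ U V
  | trans : SubU φ Φ U U' → SubU φ Φ U' U'' → SubU φ Φ U U''
  | inpCtx : SubU φ Φ U U' → SubU φ Φ (.inp A c U) (.inp A c U')
  | outCtx : SubU φ Φ U U' → SubU φ Φ (.out A c U) (.out A c U')
  | inpWeak : semIncl φ Φ B A → capLe φ Φ ic jc → SubU φ Φ (.inp A ic U) (.inp B jc U)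
  | outWeak : semIncl φ Φ B A → capLe φ Φ ic jc → SubU φ Φ (.out A ic U) (.out B jc U)
  | inpScope : SubU φ Φ (.par (.inp A jc U) (V.delay (A.addCap jc))) (.inp A jc (.par U V))
  | outScope : SubU φ Φ (.par (.out A jc U) (V.delay (A.addCap jc))) (.out A jc (.par U V))

/-- Subusage extended to reduction results, with the convention that
`Error ⊑ W` for every usage `W` and the only result below `Error` is `Error`. -/
def SubR (φ : Finset IVar) (Φ : CSet) : URes → URes → Prop
  | .err, _ => True
  | .ok _, .err => False
  | .ok U, .ok V => SubU φ Φ U V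

/-- The subusage relation generated *without* the congruence and transitivity rules. -/
inductive SubCT (φ : Finset IVar) (Φ : CSet) : Usage → Usage → Prop
  | toNil : SubCT φ Φ U .nil
  | choiceElimL : SubCT φ Φ (.choice U V) U
  | choiceElimR : SubCT φ Φ (.choice U V) V
  | choiceCtxL : SubCT φ Φ U U' → SubCT φ Φ (.choice U V) (.choice U' V)
  | choiceCtxR : SubCT φ Φ V V' → SubCT φ Φ (.choice U V) (.choice U V')
  | parCtx : SubCT φ Φ U U' → SubCT φ Φ (.par U V) (.par U' V)
  | bangCtx : SubCT φ Φ U U' → SubCT φ Φ (.bang U) (.bang U')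
  | inpCtx : SubCT φ Φ U U' → SubCT φ Φ (.inp A c U) (.inp A c U')
  | outCtx : SubCT φ Φ U U' → SubCT φ Φ (.out A c U) (.out A c U')
  | inpWeak : semIncl φ Φ B A → capLe φ Φ ic jc → SubCT φ Φ (.inp A ic U) (.inp B jc U)
  | outWeak : semIncl φ Φ B A → capLe φ Φ ic jc → SubCT φ Φ (.out A ic U) (.out B jc U)
  | inpScope : SubCT φ Φ (.par (.inp A jc U) (V.delay (A.addCap jc))) (.inp A jc (.par U V))
  | outScope : SubCT φ Φ (.par (.out A jc U) (V.delay (A.addCap jc))) (.out A jc (.par U V))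

/-- One step of subusage up to congruence: `U ⊑_t V` iff `U ≡ U'`, `V ≡ V'` and
`U' ⊑_ct V'` for some `U'`, `V'`. -/
def SubT (φ : Finset IVar) (Φ : CSet) (U V : Usage) : Prop :=
  ∃ U' V', UCongr U U' ∧ UCongr V V' ∧ SubCT φ Φ U' V'

/-- An action `α^{A}_{c}.U` : an input if the boolean is `true`, an output otherwise. -/
def act : Bool → Interval → Cap → Usage → Usage
  | true => Usage.inp
  | false => Usage.out

/-- Optional replication: `ost true U = !U` and `ost false U = U`. -/
def ost : Bool → Usage → Usage
  | true, U => .bang U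
  | false, U => U


lemma semLe_refl (φ : Finset IVar) (Φ : CSet) (I : Idx) : semLe φ Φ I I :=
  fun _ _ => le_refl _

lemma semIncl_refl (φ : Finset IVar) (Φ : CSet) (A : Interval) : semIncl φ Φ A A :=
  fun _ _ => ⟨le_refl _, le_refl _⟩

lemma capLe_refl (φ : Finset IVar) (Φ : CSet) (c : Cap) : capLe φ Φ c c := by
  cases c with
  | single I => exact semLe_refl φ Φ I
  | intv I J => exact ⟨semLe_refl φ Φ I, semLe_refl φ Φ J⟩

lemma subCT_refl (φ : Finset IVar) (Φ : CSet) : ∀ U, SubCT φ Φ U U := by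
  intro U
  induction U with
  | nil => exact SubCT.toNil
  | par U V ihU ihV => exact SubCT.parCtx ihU
  | inp A c U ih => exact SubCT.inpCtx ih
  | out A c U ih => exact SubCT.outCtx ih
  | bang U ih => exact SubCT.bangCtx ih
  | choice U V ihU ihV => exact SubCT.choiceCtxL ihU

lemma subCT_subU {φ : Finset IVar} {Φ : CSet} {U V : Usage}
    (h : SubCT φ Φ U V) : SubU φ Φ U V := by
  induction h with
  | toNil => exact SubU.toNil
  | choiceElimL => exact SubU.choiceElimL
  | choiceElimR => exact SubU.choiceElimR
  | choiceCtxL _ ih => exact SubU.choiceCtxL ih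
  | choiceCtxR _ ih => exact SubU.choiceCtxR ih
  | parCtx _ ih => exact SubU.parCtx ih
  | bangCtx _ ih => exact SubU.bangCtx ih
  | inpCtx _ ih => exact SubU.inpCtx ih
  | outCtx _ ih => exact SubU.outCtx ih
  | inpWeak h1 h2 => exact SubU.inpWeak h1 h2
  | outWeak h1 h2 => exact SubU.outWeak h1 h2
  | inpScope => exact SubU.inpScope
  | outScope => exact SubU.outScope

lemma subU_refl (φ : Finset IVar) (Φ : CSet) (U : Usage) : SubU φ Φ U U :=
  subCT_subU (subCT_refl φ Φ U)

lemma subT_subU {φ : Finset IVar} {Φ : CSet} {U V : Usage}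
    (h : SubT φ Φ U V) : SubU φ Φ U V := by
  obtain ⟨U', V', h1, h2, h3⟩ := h
  exact SubU.congr h1 (subCT_subU h3) (UCongr.symm h2)

lemma subT_of_subCT {φ : Finset IVar} {Φ : CSet} {U V : Usage}
    (h : SubCT φ Φ U V) : SubT φ Φ U V :=
  ⟨U, V, UCongr.refl, UCongr.refl, h⟩

lemma subT_of_congr {φ : Finset IVar} {Φ : CSet} {U V : Usage}
    (h : UCongr U V) : SubT φ Φ U V :=
  ⟨V, V, h, UCongr.refl, subCT_refl φ Φ V⟩

/-- Decomposition of subusage: the subusage relation coincides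
with the reflexive-transitive closure of `⊑_t`. -/
theorem subusage_decomposition (φ : Finset IVar) (Φ : CSet) (U V : Usage) :
    SubU φ Φ U V ↔ Relation.ReflTransGen (SubT φ Φ) U V := by
  constructor
  · intro h
    induction h with
    | toNil => exact Relation.ReflTransGen.single (subT_of_subCT SubCT.toNil)
    | choiceElimL => exact Relation.ReflTransGen.single (subT_of_subCT SubCT.choiceElimL)
    | choiceElimR => exact Relation.ReflTransGen.single (subT_of_subCT SubCT.choiceElimR)
    | @choiceCtxL U U' V _ ih =>
        refine Relation.ReflTransGen.lift (fun X => Usage.choice X V) ?_ _ _ ih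
        rintro a b ⟨a', b', h1, h2, h3⟩
        exact ⟨.choice a' V, .choice b' V, UCongr.choiceCtx h1 UCongr.refl,
          UCongr.choiceCtx h2 UCongr.refl, SubCT.choiceCtxL h3⟩
    | @choiceCtxR V V' U _ ih =>
        refine Relation.ReflTransGen.lift (fun X => Usage.choice U X) ?_ _ _ ih
        rintro a b ⟨a', b', h1, h2, h3⟩
        exact ⟨.choice U a', .choice U b', UCongr.choiceCtx UCongr.refl h1,
          UCongr.choiceCtx UCongr.refl h2, SubCT.choiceCtxR h3⟩
    | @parCtx U U' V _ ih =>
        refine Relation.ReflTransGen.lift (fun X => Usage.par X V) ?_ _ _ ih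
        rintro a b ⟨a', b', h1, h2, h3⟩
        exact ⟨.par a' V, .par b' V, UCongr.parCtx h1 UCongr.refl,
          UCongr.parCtx h2 UCongr.refl, SubCT.parCtx h3⟩
    | @bangCtx U U' _ ih =>
        refine Relation.ReflTransGen.lift Usage.bang ?_ _ _ ih
        rintro a b ⟨a', b', h1, h2, h3⟩
        exact ⟨.bang a', .bang b', UCongr.bangCtx h1, UCongr.bangCtx h2,
          SubCT.bangCtx h3⟩
    | @congr U U' V' V h1 _ h3 ih =>
        exact Relation.ReflTransGen.head (subT_of_congr h1)
          (ih.tail (subT_of_congr h3))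
    | trans _ _ ih1 ih2 => exact ih1.trans ih2
    | @inpCtx U U' A c _ ih =>
        refine Relation.ReflTransGen.lift (Usage.inp A c) ?_ _ _ ih
        rintro a b ⟨a', b', h1, h2, h3⟩
        exact ⟨.inp A c a', .inp A c b', UCongr.inpCtx h1, UCongr.inpCtx h2,
          SubCT.inpCtx h3⟩
    | @outCtx U U' A c _ ih =>
        refine Relation.ReflTransGen.lift (Usage.out A c) ?_ _ _ ih
        rintro a b ⟨a', b', h1, h2, h3⟩
        exact ⟨.out A c a', .out A c b', UCongr.outCtx h1, UCongr.outCtx h2,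
          SubCT.outCtx h3⟩
    | inpWeak h1 h2 => exact Relation.ReflTransGen.single (subT_of_subCT (SubCT.inpWeak h1 h2))
    | outWeak h1 h2 => exact Relation.ReflTransGen.single (subT_of_subCT (SubCT.outWeak h1 h2))
    | inpScope => exact Relation.ReflTransGen.single (subT_of_subCT SubCT.inpScope)
    | outScope => exact Relation.ReflTransGen.single (subT_of_subCT SubCT.outScope)
  · intro h
    induction h with
    | refl => exact subU_refl φ Φ U
    | tail _ hstep ih => exact SubU.trans ih (subT_subU hstep)


end PiSpan
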